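/- With M, F, (e_i), ⟨·,·⟩ and v_γ as in the context, set v₁ := −e_a − e_b − 2e_c and v₂ := v₁ + v_γ. Then: ⟨e_a, v_γ⟩ = 0 and ⟨e_b, v_γ⟩ = 0; ⟨e_a, v₁⟩ = ⟨e_b, v₁⟩ = ⟨e_a, v₂⟩ = ⟨e_b, v₂⟩ = 0; v₂ − v₁ = v_γ; and ⟨v₁, v₂⟩ = 4. -/

import Mathlib

/-- With the exchange-matrix data of the ideal triangulation `Δ′` of a
minimal-marked one-holed surface of genus `g ≥ 2` (arcs `a, b, c, c′, d` of the first
handle, `F` the set of internal arcs), `v_γ := 2·Σ_{i∈F} e_i`, `v₁ := −e_a − e_b − 2e_c`,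
`v₂ := v₁ + v_γ`, one has `⟨e_a,v_γ⟩ = ⟨e_b,v_γ⟩ = 0`,
`⟨e_a,v₁⟩ = ⟨e_b,v₁⟩ = ⟨e_a,v₂⟩ = ⟨e_b,v₂⟩ = 0`, `v₂ − v₁ = v_γ`, and `⟨v₁,v₂⟩ = 4`. -/
theorem stmt10 {I : Type*} (a b c c' d : I)
    (hab : a ≠ b) (hac : a ≠ c) (hac' : a ≠ c') (had : a ≠ d)
    (hbc : b ≠ c) (hbc' : b ≠ c') (hbd : b ≠ d)
    (hcc' : c ≠ c') (hcd : c ≠ d) (hc'd : c' ≠ d)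
    (F : Finset I) (haF : a ∈ F) (hbF : b ∈ F) (hcF : c ∈ F) (hc'F : c' ∈ F) (hdF : d ∈ F)
    (e : I → (I →₀ ℤ)) (he : ∀ i : I, e i = Finsupp.single i 1)
    (B : (I →₀ ℤ) → (I →₀ ℤ) → ℤ)
    (hBadd_left : ∀ v₁ v₂ w, B (v₁ + v₂) w = B v₁ w + B v₂ w)
    (hBadd_right : ∀ v w₁ w₂, B v (w₁ + w₂) = B v w₁ + B v w₂)
    (hBskew : ∀ v w, B v w = - B w v)
    (hBab : B (e a) (e b) = -2) (hBac : B (e a) (e c) = 1) (hBad : B (e a) (e d) = 1)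
    (hBa0 : ∀ i : I, i ≠ b → i ≠ c → i ≠ d → B (e a) (e i) = 0)
    (hBbc : B (e b) (e c) = -1) (hBbd : B (e b) (e d) = -1)
    (hBb0 : ∀ i : I, i ≠ a → i ≠ c → i ≠ d → B (e b) (e i) = 0)
    (hBcc' : B (e c) (e c') = -1)
    (hBc0 : ∀ i ∈ F, i ≠ a → i ≠ b → i ≠ c' → B (e c) (e i) = 0)
    (vγ v₁ v₂ : I →₀ ℤ)
    (hvγ : vγ = (2 : ℤ) • ∑ i ∈ F, e i)
    (hv₁ : v₁ = -(e a) - e b - (2 : ℤ) • e c)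
    (hv₂ : v₂ = v₁ + vγ) :
    (B (e a) vγ = 0 ∧ B (e b) vγ = 0) ∧
    (B (e a) v₁ = 0 ∧ B (e b) v₁ = 0 ∧ B (e a) v₂ = 0 ∧ B (e b) v₂ = 0) ∧
    v₂ - v₁ = vγ ∧
    B v₁ v₂ = 4 := by
  classical

  -- basic consequences of additivity
  have hB0r : ∀ v, B v 0 = 0 := by
    intro v
    have h := hBadd_right v 0 0
    simp at h
    linarith
  have hB0l : ∀ w, B 0 w = 0 := by
    intro w
    have h := hBadd_left 0 0 w
    simp at h
    linarith
  have hBnegr : ∀ v w, B v (-w) = - B v w := by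
    intro v w
    have h := hBadd_right v w (-w)
    simp [hB0r] at h
    linarith
  have hBnegl : ∀ v w, B (-v) w = - B v w := by
    intro v w
    have h := hBadd_left v (-v) w
    simp [hB0l] at h
    linarith
  have hBself : ∀ v, B v v = 0 := by
    intro v
    have h := hBskew v v
    linarith
  have hsum : ∀ (v : I →₀ ℤ) (s : Finset I), B v (∑ i ∈ s, e i) = ∑ i ∈ s, B v (e i) := by
    intro v s
    induction s using Finset.induction with
    | empty => simp [hB0r]
    | @insert _ _ h ih => rw [Finset.sum_insert h, Finset.sum_insert h, hBadd_right, ih]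
  have hsubBCD : ({b, c, d} : Finset I) ⊆ F := by
    intro i hi
    simp only [Finset.mem_insert, Finset.mem_singleton] at hi
    rcases hi with rfl | rfl | rfl <;> assumption
  have hsubABC' : ({a, b, c'} : Finset I) ⊆ F := by
    intro i hi
    simp only [Finset.mem_insert, Finset.mem_singleton] at hi
    rcases hi with rfl | rfl | rfl <;> assumption
  -- sum of B (e a) over F
  have hsa : ∑ i ∈ F, B (e a) (e i) = 0 := by
    rw [← Finset.sum_subset hsubBCD (by
      intro i _ hni
      simp only [Finset.mem_insert, Finset.mem_singleton, not_or] at hni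
      exact hBa0 i hni.1 hni.2.1 hni.2.2)]
    rw [Finset.sum_insert (by simp [hbc, hbd]), Finset.sum_insert (by simp [hcd]),
      Finset.sum_singleton, hBab, hBac, hBad]
    ring
  have hBba : B (e b) (e a) = 2 := by rw [hBskew, hBab]; ring
  have hsb : ∑ i ∈ F, B (e b) (e i) = 0 := by
    rw [← Finset.sum_subset (show ({a, c, d} : Finset I) ⊆ F by
      intro i hi
      simp only [Finset.mem_insert, Finset.mem_singleton] at hi
      rcases hi with rfl | rfl | rfl <;> assumption) (by
      intro i _ hni
      simp only [Finset.mem_insert, Finset.mem_singleton, not_or] at hni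
      exact hBb0 i hni.1 hni.2.1 hni.2.2)]
    rw [Finset.sum_insert (by simp [hac, had]), Finset.sum_insert (by simp [hcd]),
      Finset.sum_singleton, hBba, hBbc, hBbd]
    ring
  have hBca : B (e c) (e a) = -1 := by rw [hBskew, hBac]
  have hBcb : B (e c) (e b) = 1 := by rw [hBskew, hBbc]; ring
  have hsc : ∑ i ∈ F, B (e c) (e i) = -1 := by
    rw [← Finset.sum_subset hsubABC' (by
      intro i hi hni
      simp only [Finset.mem_insert, Finset.mem_singleton, not_or] at hni
      exact hBc0 i hi hni.1 hni.2.1 hni.2.2)]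
    rw [Finset.sum_insert (by simp [hab, hac']), Finset.sum_insert (by simp [hbc']),
      Finset.sum_singleton, hBca, hBcb, hBcc']
    ring
  have h2 : ∀ w : I →₀ ℤ, (2 : ℤ) • w = w + w := two_smul ℤ
  have hBvγ : ∀ v, B v vγ = 2 * ∑ i ∈ F, B v (e i) := by
    intro v
    rw [hvγ, h2, hBadd_right, hsum]
    ring
  have hagγ : B (e a) vγ = 0 := by rw [hBvγ, hsa]; ring
  have hbgγ : B (e b) vγ = 0 := by rw [hBvγ, hsb]; ring
  have hcgγ : B (e c) vγ = -2 := by rw [hBvγ, hsc]; ring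
  have hv₁' : ∀ w, B v₁ w = - B (e a) w - B (e b) w - 2 * B (e c) w := by
    intro w
    rw [hv₁]
    have : -(e a) - e b - (2 : ℤ) • e c = (-(e a)) + ((- e b) + ((- e c) + (- e c))) := by
      rw [h2]; abel
    rw [this, hBadd_left, hBadd_left, hBadd_left, hBnegl, hBnegl, hBnegl]
    ring
  have hav₁ : B (e a) v₁ = 0 := by
    rw [hBskew, hv₁', hBself, hBba, hBca]
    ring
  have hbv₁ : B (e b) v₁ = 0 := by
    rw [hBskew, hv₁', hBab, hBself, hBcb]
    ring
  have hav₂ : B (e a) v₂ = 0 := by rw [hv₂, hBadd_right, hav₁, hagγ]; ring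
  have hbv₂ : B (e b) v₂ = 0 := by rw [hv₂, hBadd_right, hbv₁, hbgγ]; ring
  refine ⟨⟨hagγ, hbgγ⟩, ⟨hav₁, hbv₁, hav₂, hbv₂⟩, by rw [hv₂]; abel, ?_⟩
  rw [hv₂, hBadd_right, hBself, hv₁', hagγ, hbgγ, hcgγ]
  ring
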